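/- Let $F$ be a field, $n, u$ positive integers with $x^n - u$ irreducible over $\mathbb{Q}$, and let $g \in F(x_0,\dots,x_{n-1}) \setminus F$. Then $g, g^*, \dots, g^{(n-1)*}$ are algebraically independent over $F$, where $(\ )^*$ is the $F$-monomorphism of $F(x_0,\dots,x_{n-1})$ determined by $x_i^* = x_{i+1}$ for $0 \le i < n-1$ and $x_{n-1}^* = x_0^u$. -/

import Mathlib

set_option maxHeartbeats 1000000

open MvPolynomial

noncomputable section

/-- The rational function field `F(x₀,…,x_{n-1})`. -/
abbrev KK (n : ℕ) (F : Type*) [Field F] := FractionRing (MvPolynomial (Fin n) F)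

def toKK {n : ℕ} {F : Type*} [Field F] : MvPolynomial (Fin n) F →+* KK n F := algebraMap _ _

/-- `σ` is the star monomorphism: `xᵢ* = x_{i+1}` for `i < n-1` and `x_{n-1}* = x₀^u`. -/
def IsStar {F : Type*} [Field F] (n u : ℕ) (σ : KK n F →ₐ[F] KK n F) : Prop :=
  ∀ i : Fin n, σ (toKK (X i)) =
    toKK (if h : (i : ℕ) + 1 < n then X (⟨(i : ℕ) + 1, h⟩ : Fin n)
          else X (⟨0, i.pos⟩ : Fin n) ^ u)

namespace StarAux


variable {F : Type*} [Field F] {n u : ℕ}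

/-- weight of an exponent vector -/
def ww (α : ℝ) (a : Fin n →₀ ℕ) : ℝ := ∑ i : Fin n, (a i : ℝ) * α ^ (i : ℕ)

lemma ww_zero (α : ℝ) : ww (n := n) α 0 = 0 := by simp [ww]

lemma ww_add (α : ℝ) (a b : Fin n →₀ ℕ) : ww α (a + b) = ww α a + ww α b := by
  simp [ww, add_mul, Finset.sum_add_distrib]

/-- weighted degree of a nonzero polynomial (junk value 0 at 0) -/
def dd (α : ℝ) (p : MvPolynomial (Fin n) F) : ℝ :=
  if h : p.support.Nonempty then p.support.sup' h (ww α) else 0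

variable {α : ℝ} {p q : MvPolynomial (Fin n) F}

lemma le_dd (hp : p ≠ 0) {a : Fin n →₀ ℕ} (ha : a ∈ p.support) : ww α a ≤ dd α p := by
  rw [dd, dif_pos (support_nonempty.2 hp)]
  exact Finset.le_sup' _ ha

lemma exists_dd (hp : p ≠ 0) : ∃ a ∈ p.support, ww α a = dd α p := by
  rw [dd, dif_pos (support_nonempty.2 hp)]
  obtain ⟨a, ha, h⟩ := Finset.exists_mem_eq_sup' (support_nonempty.2 hp) (ww (n := n) α)
  exact ⟨a, ha, h.symm⟩

lemma dd_eq_of (hp : p ≠ 0) {D : ℝ} (h1 : ∀ a ∈ p.support, ww α a ≤ D)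
    (h2 : ∃ a ∈ p.support, ww α a = D) : dd α p = D := by
  rw [dd, dif_pos (support_nonempty.2 hp)]
  refine le_antisymm (Finset.sup'_le _ _ h1) ?_
  obtain ⟨a, ha, h⟩ := h2
  exact h ▸ Finset.le_sup' _ ha

section MulSec
variable (hinj : Function.Injective (ww (n := n) α))
include hinj

lemma dd_mul (hp : p ≠ 0) (hq : q ≠ 0) : dd α (p * q) = dd α p + dd α q := by
  classical
  obtain ⟨a0, ha0, hwa0⟩ := exists_dd (α := α) hp
  obtain ⟨b0, hb0, hwb0⟩ := exists_dd (α := α) hq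
  have hco : (p * q).coeff (a0 + b0) = p.coeff a0 * q.coeff b0 := by
    rw [coeff_mul]
    refine Finset.sum_eq_single (a0, b0) ?_ ?_
    · rintro ⟨a, b⟩ hab hne
      rw [Finset.HasAntidiagonal.mem_antidiagonal] at hab
      by_contra h
      have ha : a ∈ p.support := by
        simp only [mem_support_iff]; intro h'; exact h (by simp [h'])
      have hb : b ∈ q.support := by
        simp only [mem_support_iff]; intro h'; exact h (by simp [h'])
      have h1 : ww α a ≤ dd α p := le_dd hp ha
      have h2 : ww α b ≤ dd α q := le_dd hq hb
      have h3 : ww α a + ww α b = dd α p + dd α q := by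
        rw [← ww_add, hab, ww_add, hwa0, hwb0]
      have h4 : ww α a = ww α a0 := by rw [hwa0]; linarith
      have h5 : ww α b = ww α b0 := by rw [hwb0]; linarith
      apply hne
      rw [Prod.mk.injEq]
      exact ⟨hinj h4, hinj h5⟩
    · intro h; exact absurd (by simp : (a0, b0) ∈ Finset.HasAntidiagonal.antidiagonal (a0 + b0)) h
  have hc0 : (p * q).coeff (a0 + b0) ≠ 0 := by
    rw [hco]
    exact mul_ne_zero (mem_support_iff.1 ha0) (mem_support_iff.1 hb0)
  refine dd_eq_of (mul_ne_zero hp hq) ?_ ⟨a0 + b0, mem_support_iff.2 hc0, by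
    rw [ww_add, hwa0, hwb0]⟩
  intro c hc
  rw [mem_support_iff, coeff_mul] at hc
  obtain ⟨⟨a, b⟩, hab, hne⟩ := Finset.exists_ne_zero_of_sum_ne_zero hc
  rw [Finset.HasAntidiagonal.mem_antidiagonal] at hab
  have ha : a ∈ p.support := by
    simp only [mem_support_iff]; intro h'; exact hne (by simp [h'])
  have hb : b ∈ q.support := by
    simp only [mem_support_iff]; intro h'; exact hne (by simp [h'])
  calc ww α c = ww α a + ww α b := by rw [← ww_add, hab]
  _ ≤ dd α p + dd α q := add_le_add (le_dd hp ha) (le_dd hq hb)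

lemma dd_pow (hp : p ≠ 0) (k : ℕ) : dd α (p ^ k) = k * dd α p := by
  induction k with
  | zero =>
    classical
    rw [pow_zero, Nat.cast_zero, zero_mul]
    have hs : (1 : MvPolynomial (Fin n) F).support = {0} := by
      rw [← C_1 (R := F), C_apply, support_monomial, if_neg one_ne_zero]
    refine dd_eq_of one_ne_zero ?_ ⟨0, ?_, ww_zero α⟩
    · intro a ha
      rw [hs, Finset.mem_singleton] at ha
      subst ha
      exact le_of_eq (ww_zero α)
    · rw [hs]; exact Finset.mem_singleton_self 0
  | succ k ih =>
    rw [pow_succ, dd_mul hinj (pow_ne_zero _ hp) hp, ih]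
    push_cast
    ring

omit hinj in
lemma dd_sum_ne_zero {ι : Type*} {s : Finset ι} (hs : s.Nonempty)
    {f : ι → MvPolynomial (Fin n) F} (hf : ∀ i ∈ s, f i ≠ 0)
    (hd : ∀ i ∈ s, ∀ j ∈ s, dd α (f i) = dd α (f j) → i = j) :
    (∑ i ∈ s, f i) ≠ 0 := by
  obtain ⟨i0, hi0, hmax⟩ := s.exists_max_image (fun i => dd α (f i)) hs
  obtain ⟨a0, ha0, hwa0⟩ := exists_dd (α := α) (hf i0 hi0)
  have : (∑ i ∈ s, f i).coeff a0 = (f i0).coeff a0 := by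
    rw [coeff_sum]
    refine Finset.sum_eq_single_of_mem i0 hi0 ?_
    intro j hj hji
    by_contra hcj
    have haj : a0 ∈ (f j).support := mem_support_iff.2 hcj
    have h1 : ww α a0 ≤ dd α (f j) := le_dd (hf j hj) haj
    have h2 : dd α (f j) ≤ dd α (f i0) := hmax j hj
    exact hji (hd j hj i0 hi0 (le_antisymm h2 (hwa0 ▸ h1)))
  intro hzero
  rw [hzero, coeff_zero] at this
  exact mem_support_iff.1 ha0 this.symm


omit hinj in
lemma dd_C {c : F} (hc : c ≠ 0) : dd α (C c : MvPolynomial (Fin n) F) = 0 := by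
  classical
  have hs : (C c : MvPolynomial (Fin n) F).support = {0} := by
    rw [C_apply, support_monomial, if_neg hc]
  refine dd_eq_of (fun h => hc (by simpa using congrArg (coeff 0) h)) ?_ ⟨0, ?_, ww_zero α⟩
  · intro a ha
    rw [hs, Finset.mem_singleton] at ha
    subst ha
    exact le_of_eq (ww_zero α)
  · rw [hs]; exact Finset.mem_singleton_self 0

lemma dd_prod {ι : Type*} (s : Finset ι) (f : ι → MvPolynomial (Fin n) F)
    (hf : ∀ i ∈ s, f i ≠ 0) :
    (∏ i ∈ s, f i) ≠ 0 ∧ dd α (∏ i ∈ s, f i) = ∑ i ∈ s, dd α (f i) := by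
  classical
  induction s using Finset.induction_on with
  | empty =>
    refine ⟨one_ne_zero, ?_⟩
    rw [Finset.prod_empty, Finset.sum_empty]
    have := dd_pow hinj (p := (1 : MvPolynomial (Fin n) F)) one_ne_zero 0
    simpa using this
  | @insert x t hx ih =>
    obtain ⟨h1, h2⟩ := ih fun i hi => hf i (Finset.mem_insert_of_mem hi)
    have hfx : f x ≠ 0 := hf x (Finset.mem_insert_self x t)
    rw [Finset.prod_insert hx, Finset.sum_insert hx]
    exact ⟨mul_ne_zero hfx h1, by rw [dd_mul hinj hfx h1, h2]⟩


end MulSec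

lemma ww_injective {n u : ℕ} (hn : 0 < n) (hu : 0 < u)
    (hirr : Irreducible ((Polynomial.X : Polynomial ℚ) ^ n - Polynomial.C (u : ℚ))) :
    Function.Injective (ww (n := n) ((u : ℝ) ^ ((n : ℝ)⁻¹))) := by
  set α : ℝ := (u : ℝ) ^ ((n : ℝ)⁻¹) with hα
  have hαn : α ^ n = (u : ℝ) := Real.rpow_inv_natCast_pow (Nat.cast_nonneg u) hn.ne'
  have hroot : Polynomial.aeval α ((Polynomial.X : Polynomial ℚ) ^ n - Polynomial.C (u : ℚ)) = 0 := by
    simp [hαn]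
  have hmonic : ((Polynomial.X : Polynomial ℚ) ^ n - Polynomial.C (u : ℚ)).Monic :=
    Polynomial.monic_X_pow_sub_C _ hn.ne'
  have hmin : (Polynomial.X : Polynomial ℚ) ^ n - Polynomial.C (u : ℚ) = minpoly ℚ α :=
    minpoly.eq_of_irreducible_of_monic hirr hroot hmonic
  have hdeg : (minpoly ℚ α).natDegree = n := by
    rw [← hmin, Polynomial.natDegree_X_pow_sub_C]
  have li : LinearIndependent ℚ fun i : Fin (minpoly ℚ α).natDegree => α ^ (i : ℕ) :=
    linearIndependent_pow α
  rw [hdeg] at li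
  rw [Fintype.linearIndependent_iff] at li
  intro a b hab
  ext i
  have key : ∀ i : Fin n, ((a i : ℚ) - (b i : ℚ)) • α ^ (i : ℕ) =
      ((a i : ℝ) - (b i : ℝ)) * α ^ (i : ℕ) := by
    intro i; push_cast [Rat.smul_def]; ring
  have hsum : ∑ i : Fin n, ((a i : ℚ) - (b i : ℚ)) • α ^ (i : ℕ) = 0 := by
    rw [Finset.sum_congr rfl fun i _ => key i]
    have : ∑ i : Fin n, ((a i : ℝ) - (b i : ℝ)) * α ^ (i : ℕ)
        = ww α a - ww α b := by
      rw [ww, ww, ← Finset.sum_sub_distrib]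
      congr 1; ext i; ring
    rw [this, hab, sub_self]
  have := li _ hsum i
  have h2 : (a i : ℚ) = (b i : ℚ) := by linarith [sub_eq_zero.1 this]
  exact_mod_cast h2




/-- the substitution target -/
def SX (n u : ℕ) (hn : 0 < n) : Fin n → MvPolynomial (Fin n) F := fun i =>
  if h : (i : ℕ) + 1 < n then X (⟨(i : ℕ) + 1, h⟩ : Fin n)
  else X (⟨0, hn⟩ : Fin n) ^ u

/-- the polynomial-level star map -/
def Sσ (n u : ℕ) (hn : 0 < n) : MvPolynomial (Fin n) F →ₐ[F] MvPolynomial (Fin n) F :=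
  aeval (SX n u hn)

/-- the exponent-vector transform -/
def TT (n u : ℕ) (hn : 0 < n) (a : Fin n →₀ ℕ) : Fin n →₀ ℕ :=
  Finsupp.equivFunOnFinite.symm fun j : Fin n =>
    if (j : ℕ) = 0 then u * a ⟨n - 1, by omega⟩ else a ⟨(j : ℕ) - 1, by omega⟩

lemma TT_apply (hn : 0 < n) (a : Fin n →₀ ℕ) (j : Fin n) :
    TT n u hn a j = if (j : ℕ) = 0 then u * a ⟨n - 1, by omega⟩
      else a ⟨(j : ℕ) - 1, by omega⟩ := rfl

/-- the exponent of `SX i ^ (a i)` -/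
def ee (n u : ℕ) (hn : 0 < n) (a : Fin n →₀ ℕ) (i : Fin n) : Fin n →₀ ℕ :=
  if h : (i : ℕ) + 1 < n then Finsupp.single (⟨(i : ℕ) + 1, h⟩ : Fin n) (a i)
  else Finsupp.single (⟨0, hn⟩ : Fin n) (u * a i)

lemma SX_pow (hn : 0 < n) (a : Fin n →₀ ℕ) (i : Fin n) :
    (SX n u hn i : MvPolynomial (Fin n) F) ^ a i = monomial (ee n u hn a i) 1 := by
  rw [SX, ee]
  split_ifs with h
  · rw [X_pow_eq_monomial]
  · rw [← pow_mul, X_pow_eq_monomial, mul_comm]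

lemma prod_monomial_one {ι : Type*} (s : Finset ι) (e : ι → (Fin n →₀ ℕ)) :
    (∏ i ∈ s, (monomial (e i) (1 : F))) = monomial (∑ i ∈ s, e i) 1 := by
  classical
  induction s using Finset.induction_on with
  | empty => simp [monomial_zero']
  | @insert x t hx ih =>
    rw [Finset.prod_insert hx, Finset.sum_insert hx, ih, monomial_mul, one_mul]

lemma sum_ee (hn : 0 < n) (a : Fin n →₀ ℕ) :
    ∑ i : Fin n, ee n u hn a i = TT n u hn a := by
  ext j
  rw [Finsupp.finset_sum_apply, TT_apply]
  by_cases hj : (j : ℕ) = 0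
  · rw [if_pos hj]
    have h0 : ∀ i ∈ Finset.univ, i ≠ (⟨n - 1, by omega⟩ : Fin n) → ee n u hn a i j = 0 := by
      intro i _ hi
      rw [ee]
      split_ifs with h
      · rw [Finsupp.single_apply, if_neg]
        intro he
        rw [Fin.ext_iff] at he
        simp only at he
        omega
      · exfalso
        apply hi
        rw [Fin.ext_iff]
        simp only
        omega
    rw [Finset.sum_eq_single_of_mem _ (Finset.mem_univ _) h0, ee]
    have h : ¬ ((n - 1 : ℕ) + 1 < n) := by omega
    rw [dif_neg h, Finsupp.single_apply, if_pos]
    rw [Fin.ext_iff]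
    simp only
    omega
  · rw [if_neg hj]
    have hjn : (j : ℕ) < n := j.2
    have h0 : ∀ i ∈ Finset.univ, i ≠ (⟨(j : ℕ) - 1, by omega⟩ : Fin n) → ee n u hn a i j = 0 := by
      intro i _ hi
      rw [ee]
      split_ifs with h
      · rw [Finsupp.single_apply, if_neg]
        intro he
        rw [Fin.ext_iff] at he
        simp only at he
        apply hi
        rw [Fin.ext_iff]
        simp only
        omega
      · rw [Finsupp.single_apply, if_neg]
        intro he
        rw [Fin.ext_iff] at he
        simp only at he
        omega
    rw [Finset.sum_eq_single_of_mem _ (Finset.mem_univ _) h0, ee]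
    have h : ((j : ℕ) - 1) + 1 < n := by omega
    rw [dif_pos h, Finsupp.single_apply, if_pos]
    rw [Fin.ext_iff]
    simp only
    omega
  
lemma Sσ_monomial (hn : 0 < n) (a : Fin n →₀ ℕ) (c : F) :
    Sσ n u hn (monomial a c) = monomial (TT n u hn a) c := by
  rw [Sσ, aeval_monomial, Finsupp.prod_pow]
  rw [Finset.prod_congr rfl fun i _ => SX_pow hn a i, prod_monomial_one, sum_ee]
  rw [algebraMap_eq, C_mul_monomial, mul_one]

lemma ww_TT (hn : 0 < n) {α : ℝ} (hαn : α ^ n = (u : ℝ)) (a : Fin n →₀ ℕ) :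
    ww α (TT n u hn a) = α * ww α a := by
  obtain ⟨m, rfl⟩ : ∃ m, n = m + 1 := ⟨n - 1, by omega⟩
  rw [ww, ww, Fin.sum_univ_succ, Finset.mul_sum]
  rw [Fin.sum_univ_castSucc (n := m) (f := fun i => α * ((a i : ℝ) * α ^ (i : ℕ)))]
  have h0 : ((TT (m+1) u hn a) 0 : ℝ) * α ^ ((0 : Fin (m+1)) : ℕ)
      = α * ((a (Fin.last m) : ℝ) * α ^ ((Fin.last m : Fin (m+1)) : ℕ)) := by
    rw [TT_apply, if_pos (by simp : (((0 : Fin (m+1))) : ℕ) = 0)]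
    have : (⟨m + 1 - 1, by omega⟩ : Fin (m+1)) = Fin.last m := by
      rw [Fin.ext_iff]; simp
    rw [this]
    push_cast [← hαn, Fin.val_last, Fin.val_zero]
    ring
  rw [h0]
  rw [add_comm (α * _)]
  congr 1
  refine Finset.sum_congr rfl fun i _ => ?_
  rw [TT_apply]
  have hi : ((i.succ : Fin (m+1)) : ℕ) = (i : ℕ) + 1 := by simp
  rw [if_neg (by omega)]
  have : (⟨((i.succ : Fin (m+1)) : ℕ) - 1, by omega⟩ : Fin (m+1)) = i.castSucc := by
    rw [Fin.ext_iff]; simp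
  rw [this]
  have hc : ((i.castSucc : Fin (m+1)) : ℕ) = (i : ℕ) := by simp
  rw [hi, hc]
  ring


section DegSec
variable (hn : 0 < n) {α : ℝ} (hα : 0 < α) (hαn : α ^ n = (u : ℝ))
  (hinj : Function.Injective (ww (n := n) α))
include hn hα hαn hinj

omit hα hinj in
lemma Sσ_as_sum' (p : MvPolynomial (Fin n) F) : True := trivial

lemma TT_inj : Function.Injective (TT n u hn) := by
  intro a b h
  apply hinj
  have h1 := ww_TT hn hαn a
  have h2 := ww_TT hn hαn b
  rw [h] at h1
  exact mul_left_cancel₀ hα.ne' (h1.symm.trans h2)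

omit hα hαn hinj in
lemma Sσ_as_sum (p : MvPolynomial (Fin n) F) :
    Sσ n u hn p = ∑ a ∈ p.support, monomial (TT n u hn a) (p.coeff a) := by
  conv_lhs => rw [p.as_sum]
  rw [map_sum]
  exact Finset.sum_congr rfl fun a _ => Sσ_monomial hn a _

lemma coeff_Sσ_TT {p : MvPolynomial (Fin n) F} {a0 : Fin n →₀ ℕ} (ha0 : a0 ∈ p.support) :
    (Sσ n u hn p).coeff (TT n u hn a0) = p.coeff a0 := by
  classical
  rw [Sσ_as_sum, coeff_sum]
  rw [Finset.sum_eq_single_of_mem a0 ha0 ?_, coeff_monomial, if_pos rfl]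
  intro a _ ha
  rw [coeff_monomial, if_neg]
  exact fun he => ha (TT_inj hn hα hαn hinj he)

lemma dd_Sσ {p : MvPolynomial (Fin n) F} (hp : p ≠ 0) :
    Sσ n u hn p ≠ 0 ∧ dd α (Sσ n u hn p) = α * dd α p := by
  classical
  obtain ⟨a0, ha0, hwa0⟩ := exists_dd (α := α) hp
  have hco : (Sσ n u hn p).coeff (TT n u hn a0) = p.coeff a0 :=
    coeff_Sσ_TT hn hα hαn hinj ha0
  have hne : Sσ n u hn p ≠ 0 := by
    intro h
    rw [h, coeff_zero] at hco
    exact mem_support_iff.1 ha0 hco.symm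
  refine ⟨hne, dd_eq_of hne ?_ ⟨TT n u hn a0, ?_, by rw [ww_TT hn hαn, hwa0]⟩⟩
  · intro b hb
    rw [mem_support_iff, Sσ_as_sum, coeff_sum] at hb
    obtain ⟨a, ha, hane⟩ := Finset.exists_ne_zero_of_sum_ne_zero hb
    rw [coeff_monomial] at hane
    have : TT n u hn a = b := by
      by_contra hc
      rw [if_neg hc] at hane
      exact hane rfl
    rw [← this, ww_TT hn hαn]
    exact mul_le_mul_of_nonneg_left (le_dd hp ha) hα.le
  · rw [mem_support_iff, hco]
    exact mem_support_iff.1 ha0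

lemma dd_Sσ_iter {p : MvPolynomial (Fin n) F} (hp : p ≠ 0) (k : ℕ) :
    (⇑(Sσ n u hn (F := F)))^[k] p ≠ 0 ∧
      dd α ((⇑(Sσ n u hn (F := F)))^[k] p) = α ^ k * dd α p := by
  induction k with
  | zero => exact ⟨hp, by simp⟩
  | succ k ih =>
    rw [Function.iterate_succ_apply']
    obtain ⟨h1, h2⟩ := ih
    obtain ⟨h3, h4⟩ := dd_Sσ hn hα hαn hinj h1
    exact ⟨h3, by rw [h4, h2, pow_succ]; ring⟩

end DegSec

section KKSec
variable (hn : 0 < n) (σ : KK n F →ₐ[F] KK n F) (hσ : IsStar n u σ)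

lemma toKK_injective : Function.Injective (toKK (n := n) (F := F)) :=
  IsFractionRing.injective (MvPolynomial (Fin n) F) (KK n F)

include hσ in
lemma σ_toKK (p : MvPolynomial (Fin n) F) : σ (toKK p) = toKK (Sσ n u hn p) := by
  have key : (σ.comp (IsScalarTower.toAlgHom F (MvPolynomial (Fin n) F) (KK n F))) =
      (IsScalarTower.toAlgHom F (MvPolynomial (Fin n) F) (KK n F)).comp (Sσ n u hn) := by
    apply algHom_ext
    intro i
    simp only [AlgHom.comp_apply, IsScalarTower.coe_toAlgHom']
    rw [show (algebraMap (MvPolynomial (Fin n) F) (KK n F)) = toKK from rfl]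
    rw [hσ i, Sσ, aeval_X, SX]
  have := DFunLike.congr_fun key p
  simp only [AlgHom.comp_apply, IsScalarTower.coe_toAlgHom'] at this
  exact this

include hσ in
lemma σ_iter_toKK (k : ℕ) (p : MvPolynomial (Fin n) F) :
    (⇑σ)^[k] (toKK p) = toKK ((⇑(Sσ n u hn (F := F)))^[k] p) := by
  induction k with
  | zero => rfl
  | succ k ih =>
    rw [Function.iterate_succ_apply', Function.iterate_succ_apply', ih, σ_toKK hn σ hσ]

include hσ in
lemma σ_iter_div (k : ℕ) (p q : MvPolynomial (Fin n) F) :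
    (⇑σ)^[k] (toKK p / toKK q) = toKK ((⇑(Sσ n u hn (F := F)))^[k] p) /
      toKK ((⇑(Sσ n u hn (F := F)))^[k] q) := by
  induction k with
  | zero => rfl
  | succ k ih =>
    rw [Function.iterate_succ_apply', Function.iterate_succ_apply',
      Function.iterate_succ_apply', ih, map_div₀, σ_toKK hn σ hσ, σ_toKK hn σ hσ]

end KKSec

section RedSec
variable {α : ℝ} (hinj : Function.Injective (ww (n := n) α))

lemma toKK_ne_zero {p : MvPolynomial (Fin n) F} (hp : p ≠ 0) : toKK p ≠ 0 := by
  intro h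
  exact hp (toKK_injective (by rw [h, map_zero]))

lemma toKK_C (c : F) : toKK (C c : MvPolynomial (Fin n) F) = algebraMap F (KK n F) c := by
  rw [toKK, ← MvPolynomial.algebraMap_eq, ← IsScalarTower.algebraMap_apply]

include hinj in
lemma reduce {g : KK n F} (hg : g ∉ Set.range (algebraMap F (KK n F))) :
    ∃ (c : F) (p1 p2 : MvPolynomial (Fin n) F), p1 ≠ 0 ∧ p2 ≠ 0 ∧
      g - algebraMap F (KK n F) c = toKK p1 / toKK p2 ∧ dd α p1 ≠ dd α p2 := by
  obtain ⟨f1, f2, hf2mem, hre⟩ := IsFractionRing.div_surjective (A := MvPolynomial (Fin n) F) g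
  rw [show algebraMap (MvPolynomial (Fin n) F) (KK n F) = toKK from rfl] at hre
  have hf2 : f2 ≠ 0 := nonZeroDivisors.ne_zero hf2mem
  have hf1 : f1 ≠ 0 := by
    rintro rfl
    apply hg
    refine ⟨0, ?_⟩
    rw [map_zero, ← hre, map_zero, zero_div]
  by_cases hdd : dd α f1 = dd α f2
  swap
  · exact ⟨0, f1, f2, hf1, hf2, by rw [map_zero, sub_zero, hre], hdd⟩
  obtain ⟨a1, ha1, hwa1⟩ := exists_dd (α := α) hf1
  obtain ⟨a2, ha2, hwa2⟩ := exists_dd (α := α) hf2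
  have ha12 : a1 = a2 := hinj (by rw [hwa1, hwa2, hdd])
  subst ha12
  set c : F := f1.coeff a1 * (f2.coeff a1)⁻¹ with hc
  have hc2 : f2.coeff a1 ≠ 0 := mem_support_iff.1 ha2
  have hc0 : c ≠ 0 := mul_ne_zero (mem_support_iff.1 ha1) (inv_ne_zero hc2)
  set p1 : MvPolynomial (Fin n) F := f1 - C c * f2 with hp1def
  have hKf2 : toKK f2 ≠ 0 := toKK_ne_zero hf2
  have hp1 : p1 ≠ 0 := by
    intro h
    apply hg
    refine ⟨c, ?_⟩
    have hff : f1 = C c * f2 := by rwa [sub_eq_zero] at h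
    have key : toKK (C c * f2) / toKK f2 = algebraMap F (KK n F) c := by
      rw [map_mul, mul_div_assoc, div_self hKf2, mul_one, toKK_C]
    rw [← hre, hff, key]
  have key : toKK (C c * f2) / toKK f2 = algebraMap F (KK n F) c := by
    rw [map_mul, mul_div_assoc, div_self hKf2, mul_one, toKK_C]
  have heq : g - algebraMap F (KK n F) c = toKK p1 / toKK f2 := by
    rw [hp1def, map_sub, sub_div, hre, key]
  refine ⟨c, p1, f2, hp1, hf2, heq, ?_⟩
  have hstrict : ∀ b ∈ p1.support, ww α b < dd α f2 := by
    intro b hb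
    have hbne : b ≠ a1 := by
      intro h
      subst h
      apply mem_support_iff.1 hb
      rw [hp1def, coeff_sub, coeff_C_mul, hc, inv_mul_cancel_right₀ hc2, sub_self]
    have hcases : f1.coeff b ≠ 0 ∨ f2.coeff b ≠ 0 := by
      by_contra hcon
      push_neg at hcon
      apply mem_support_iff.1 hb
      rw [hp1def, coeff_sub, coeff_C_mul, hcon.1, hcon.2, mul_zero, sub_zero]
    have hle : ww α b ≤ dd α f2 := by
      rcases hcases with h | h
      · exact hdd ▸ le_dd hf1 (mem_support_iff.2 h)
      · exact le_dd hf2 (mem_support_iff.2 h)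
    rcases lt_or_eq_of_le hle with h | h
    · exact h
    exfalso
    rcases hcases with h' | h'
    · exact hbne (hinj (by rw [h, ← hdd, hwa1]))
    · exact hbne (hinj (by rw [h, hwa2]))
  intro hcon
  obtain ⟨b, hb, hwb⟩ := exists_dd (α := α) hp1
  exact absurd (hwb ▸ hstrict b hb) (by rw [hcon]; exact lt_irrefl _)

end RedSec

section CoreSec

variable (hn : 0 < n) {α : ℝ} (hα : 0 < α) (hαn : α ^ n = (u : ℝ))
  (hinj : Function.Injective (ww (n := n) α))
  (σ : KK n F →ₐ[F] KK n F) (hσ : IsStar n u σ)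

include hn hα hαn hinj hσ in
lemma core {p1 p2 : MvPolynomial (Fin n) F} (hp1 : p1 ≠ 0) (hp2 : p2 ≠ 0)
    (hdd : dd α p1 ≠ dd α p2) {Q : MvPolynomial (Fin n) F} (hQ : Q ≠ 0) :
    (aeval (fun i : Fin n => (⇑σ)^[(i : ℕ)] (toKK p1 / toKK p2))) Q ≠ 0 := by
  intro h0
  set q1 : Fin n → MvPolynomial (Fin n) F := fun i => (⇑(Sσ n u hn (F := F)))^[(i : ℕ)] p1
    with hq1def
  set q2 : Fin n → MvPolynomial (Fin n) F := fun i => (⇑(Sσ n u hn (F := F)))^[(i : ℕ)] p2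
    with hq2def
  have hq1 : ∀ i : Fin n, q1 i ≠ 0 ∧ dd α (q1 i) = α ^ (i : ℕ) * dd α p1 :=
    fun i => dd_Sσ_iter hn hα hαn hinj hp1 (i : ℕ)
  have hq2 : ∀ i : Fin n, q2 i ≠ 0 ∧ dd α (q2 i) = α ^ (i : ℕ) * dd α p2 :=
    fun i => dd_Sσ_iter hn hα hαn hinj hp2 (i : ℕ)
  set N := Q.totalDegree with hN
  have hbound : ∀ a ∈ Q.support, ∀ i : Fin n, a i ≤ N := by
    intro a ha i
    refine le_trans ?_ (le_totalDegree ha)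
    by_cases h : a i = 0
    · simp [h]
    · exact Finset.single_le_sum (f := fun j => a j) (fun j _ => Nat.zero_le _)
        (Finsupp.mem_support_iff.2 h)
  set t : (Fin n →₀ ℕ) → MvPolynomial (Fin n) F := fun a =>
    C (Q.coeff a) * ∏ i : Fin n, ((q1 i) ^ (a i) * (q2 i) ^ (N - a i)) with htdef
  have hfac_ne : ∀ (a : Fin n →₀ ℕ), ∀ i ∈ (Finset.univ : Finset (Fin n)),
      (q1 i) ^ (a i) * (q2 i) ^ (N - a i) ≠ 0 := fun a i _ =>
    mul_ne_zero (pow_ne_zero _ (hq1 i).1) (pow_ne_zero _ (hq2 i).1)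
  have ht_ne : ∀ a ∈ Q.support, t a ≠ 0 := by
    intro a ha
    exact mul_ne_zero (fun h => mem_support_iff.1 ha (by
        have := congrArg (coeff 0) h
        simpa using this))
      (dd_prod hinj Finset.univ _ (hfac_ne a)).1
  have ht_dd : ∀ a ∈ Q.support, dd α (t a) =
      (∑ i : Fin n, (N : ℝ) * α ^ (i : ℕ) * dd α p2) + (dd α p1 - dd α p2) * ww α a := by
    intro a ha
    rw [htdef]
    have hprod := dd_prod hinj Finset.univ
      (fun i => (q1 i) ^ (a i) * (q2 i) ^ (N - a i)) (hfac_ne a)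
    rw [dd_mul hinj (fun h => mem_support_iff.1 ha (by
        have := congrArg (coeff 0) h
        simpa using this)) hprod.1,
      dd_C (mem_support_iff.1 ha), zero_add, hprod.2]
    have hterm : ∀ i ∈ (Finset.univ : Finset (Fin n)),
        dd α ((q1 i) ^ (a i) * (q2 i) ^ (N - a i)) =
          (N : ℝ) * α ^ (i : ℕ) * dd α p2 + (dd α p1 - dd α p2) * ((a i : ℝ) * α ^ (i : ℕ)) := by
      intro i _
      rw [dd_mul hinj (pow_ne_zero _ (hq1 i).1) (pow_ne_zero _ (hq2 i).1),
        dd_pow hinj (hq1 i).1, dd_pow hinj (hq2 i).1, (hq1 i).2, (hq2 i).2]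
      have : ((N - a i : ℕ) : ℝ) = (N : ℝ) - (a i : ℝ) := by
        rw [Nat.cast_sub (hbound a ha i)]
      rw [this]
      ring
    rw [Finset.sum_congr rfl hterm, Finset.sum_add_distrib]
    congr 1
    rw [ww, Finset.mul_sum]
  have hv : ∀ i : Fin n, (⇑σ)^[(i : ℕ)] (toKK p1 / toKK p2) = toKK (q1 i) / toKK (q2 i) :=
    fun i => σ_iter_div hn σ hσ (i : ℕ) p1 p2
  have hq2K : ∀ i : Fin n, toKK (q2 i) ≠ 0 := fun i => toKK_ne_zero (hq2 i).1
  have hkey : ∀ a ∈ Q.support, toKK (t a) =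
      (∏ i : Fin n, toKK (q2 i) ^ N) *
        (algebraMap F (KK n F) (Q.coeff a) * ∏ i : Fin n,
          ((⇑σ)^[(i : ℕ)] (toKK p1 / toKK p2)) ^ (a i)) := by
    intro a ha
    rw [htdef]
    simp only [map_mul, map_prod, map_pow]
    rw [toKK_C]
    rw [mul_left_comm]
    congr 1
    rw [← Finset.prod_mul_distrib]
    refine Finset.prod_congr rfl fun i _ => ?_
    rw [hv i, div_pow, pow_sub₀ _ (hq2K i) (hbound a ha i)]
    field_simp
  have hRR : (∑ a ∈ Q.support, t a) = 0 := by
    apply toKK_injective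
    rw [map_zero, map_sum, Finset.sum_congr rfl hkey, ← Finset.mul_sum]
    have hQ0 : ∑ a ∈ Q.support, algebraMap F (KK n F) (Q.coeff a) * ∏ i : Fin n,
        ((⇑σ)^[(i : ℕ)] (toKK p1 / toKK p2)) ^ (a i) = 0 := by
      rw [← eval₂_eq', ← aeval_def, h0]
    rw [hQ0, mul_zero]
  refine dd_sum_ne_zero (α := α) (support_nonempty.2 hQ) ht_ne ?_ hRR
  intro a ha b hb hab
  rw [ht_dd a ha, ht_dd b hb] at hab
  have : (dd α p1 - dd α p2) * ww α a = (dd α p1 - dd α p2) * ww α b := by linarith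
  exact hinj (mul_left_cancel₀ (sub_ne_zero.2 hdd) this)

end CoreSec

end StarAux

theorem star_iterates_algebraicIndependent {F : Type*} [Field F] (n u : ℕ)
    (hn : 0 < n) (hu : 0 < u)
    (hirr : Irreducible ((Polynomial.X : Polynomial ℚ) ^ n - Polynomial.C (u : ℚ)))
    (σ : KK n F →ₐ[F] KK n F) (hσ : IsStar n u σ)
    (g : KK n F) (hg : g ∉ Set.range (algebraMap F (KK n F))) :
    AlgebraicIndependent F (fun i : Fin n => (⇑σ)^[(i : ℕ)] g) := by
  classical
  set α : ℝ := (u : ℝ) ^ ((n : ℝ)⁻¹) with hαdef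
  have hα : 0 < α := Real.rpow_pos_of_pos (by exact_mod_cast hu) _
  have hαn : α ^ n = (u : ℝ) := Real.rpow_inv_natCast_pow (Nat.cast_nonneg u) hn.ne'
  have hinj : Function.Injective (StarAux.ww (n := n) α) := StarAux.ww_injective hn hu hirr
  obtain ⟨c, p1, p2, hp1, hp2, heq, hdd⟩ := StarAux.reduce hinj hg
  rw [algebraicIndependent_iff]
  intro P hP0
  by_contra hP
  set E : MvPolynomial (Fin n) F →ₐ[F] MvPolynomial (Fin n) F :=
    aeval (fun i => X i + C c) with hE
  set E' : MvPolynomial (Fin n) F →ₐ[F] MvPolynomial (Fin n) F :=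
    aeval (fun i => X i - C c) with hE'
  have hcomp : E'.comp E = AlgHom.id F (MvPolynomial (Fin n) F) := by
    apply algHom_ext
    intro i
    rw [AlgHom.comp_apply, hE, hE', aeval_X, map_add, aeval_X, aeval_C,
      MvPolynomial.algebraMap_eq, AlgHom.id_apply]
    ring
  have hEP : E P ≠ 0 := by
    intro h
    apply hP
    have h2 := congrArg E' h
    rwa [← AlgHom.comp_apply, hcomp, AlgHom.id_apply, map_zero] at h2
  have hiter : ∀ k : ℕ, (⇑σ)^[k] (g - algebraMap F (KK n F) c) =
      (⇑σ)^[k] g - algebraMap F (KK n F) c := by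
    intro k
    induction k with
    | zero => rfl
    | succ k ih =>
      rw [Function.iterate_succ_apply', Function.iterate_succ_apply', ih, map_sub,
        AlgHom.commutes]
  have hcomp2 : (aeval (fun i : Fin n => (⇑σ)^[(i : ℕ)] (g - algebraMap F (KK n F) c))).comp E
      = aeval (fun i : Fin n => (⇑σ)^[(i : ℕ)] g) := by
    apply algHom_ext
    intro i
    simp only [AlgHom.comp_apply, hE, aeval_X, map_add, aeval_C, hiter]
    ring
  have h0 : aeval (fun i : Fin n => (⇑σ)^[(i : ℕ)] (g - algebraMap F (KK n F) c)) (E P) = 0 := by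
    rw [← AlgHom.comp_apply, hcomp2]
    exact hP0
  rw [heq] at h0
  exact StarAux.core hn hα hαn hinj σ hσ hp1 hp2 hdd hEP h0

end
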